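/- Set h_i = a_i^{-1} b_i. For all 1 ≤ s,t ≤ n, 1 ≤ i ≤ n and 1 ≤ j ≤ k < n: ⟨h_i^ℓ, x_{st}⟩ = δ_{st}, ⟨h_i^{n_α} a_i^{-1}, x_{st}⟩ = δ_{st}, ⟨h_i^{n_β} b_i^{-1}, x_{st}⟩ = δ_{st}, ⟨E_{k,j}^ℓ, x_{st}⟩ = 0 and ⟨F_{k,j}^ℓ, x_{st}⟩ = 0. -/

import Mathlib

open scoped TensorProduct

noncomputable section

universe u v

/-- The number of inversions (the length) of a permutation of `Fin n`. -/
def permLength {n : ℕ} (σ : Equiv.Perm (Fin n)) : ℕ :=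
  (Finset.univ.filter fun p : Fin n × Fin n => p.1 < p.2 ∧ σ p.2 < σ p.1).card

/-- The defining relations of the two-parameter quantum matrix bialgebra
`O_{α,β}(M_n)`, for a family `x i j` of elements of a `k`-algebra `A`. -/
def QMRel {k : Type u} [Field k] {A : Type v} [Ring A] [Algebra k A]
    (n : ℕ) (α β : k) (x : Fin n → Fin n → A) : Prop :=
  (∀ i j l : Fin n, j < l → x i l * x i j = α⁻¹ • (x i j * x i l)) ∧
  (∀ i j l : Fin n, i < j → x j l * x i l = β • (x i l * x j l)) ∧
  (∀ i j l m : Fin n, i < j → l < m → x j l * x i m = (β * α) • (x i m * x j l)) ∧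
  (∀ i j l m : Fin n, i < j → l < m →
    x j m * x i l - x i l * x j m = (β - α) • (x i m * x j l))

/-- The quantum determinant `g = ∑_σ (-β)^{-ℓ(σ)} x_{σ(1),1} ⋯ x_{σ(n),n}`. -/
def qdet {k : Type u} [Field k] {A : Type v} [Ring A] [Algebra k A]
    (n : ℕ) (β : k) (x : Fin n → Fin n → A) : A :=
  ∑ σ : Equiv.Perm (Fin n),
    ((-β)⁻¹ ^ permLength σ) • ((List.finRange n).map fun i => x (σ i) i).prod

/-- The defining relations of the two-parameter quantized enveloping algebra
`U_{α,β}(gl_n)`, for families `a i, b i` (with inverses `ai i, bi i`, `1 ≤ i ≤ n`)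
and `e j, f j` (`1 ≤ j < n`) of elements of a `k`-algebra `U`. -/
structure UglRel {k : Type u} [Field k] {U : Type v} [Ring U] [Algebra k U]
    (n : ℕ) (α β : k) (a ai b bi e f : ℕ → U) : Prop where
  comm_aa : ∀ i j, a i * a j = a j * a i
  comm_ab : ∀ i j, a i * b j = b j * a i
  comm_bb : ∀ i j, b i * b j = b j * b i
  inv_a : ∀ i, 1 ≤ i → i ≤ n → a i * ai i = 1 ∧ ai i * a i = 1
  inv_b : ∀ i, 1 ≤ i → i ≤ n → b i * bi i = 1 ∧ bi i * b i = 1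
  rel_ae : ∀ i j, 1 ≤ i → i ≤ n → 1 ≤ j → j < n →
    a i * e j = (if i = j then α else if i = j + 1 then α⁻¹ else 1) • (e j * a i)
  rel_be : ∀ i j, 1 ≤ i → i ≤ n → 1 ≤ j → j < n →
    b i * e j = (if i = j then β else if i = j + 1 then β⁻¹ else 1) • (e j * b i)
  rel_af : ∀ i j, 1 ≤ i → i ≤ n → 1 ≤ j → j < n →
    a i * f j = (if i = j then α⁻¹ else if i = j + 1 then α else 1) • (f j * a i)
  rel_bf : ∀ i j, 1 ≤ i → i ≤ n → 1 ≤ j → j < n →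
    b i * f j = (if i = j then β⁻¹ else if i = j + 1 then β else 1) • (f j * b i)
  rel_ef : ∀ j l, 1 ≤ j → j < n → 1 ≤ l → l < n →
    e j * f l - f l * e j =
      if j = l then (α - β)⁻¹ • (a j * b (j + 1) - a (j + 1) * b j) else 0
  rel_ee : ∀ j l, 1 ≤ j → j < n → 1 ≤ l → l < n → j + 1 < l → e j * e l = e l * e j
  rel_ff : ∀ j l, 1 ≤ j → j < n → 1 ≤ l → l < n → j + 1 < l → f j * f l = f l * f j
  serre_e1 : ∀ j, 1 ≤ j → j + 1 < n →
    e j ^ 2 * e (j + 1) - (α + β) • (e j * e (j + 1) * e j)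
      + (α * β) • (e (j + 1) * e j ^ 2) = 0
  serre_e2 : ∀ j, 1 ≤ j → j + 1 < n →
    e j * e (j + 1) ^ 2 - (α + β) • (e (j + 1) * e j * e (j + 1))
      + (α * β) • (e (j + 1) ^ 2 * e j) = 0
  serre_f1 : ∀ j, 1 ≤ j → j + 1 < n →
    f j ^ 2 * f (j + 1) - (α⁻¹ + β⁻¹) • (f j * f (j + 1) * f j)
      + (α⁻¹ * β⁻¹) • (f (j + 1) * f j ^ 2) = 0
  serre_f2 : ∀ j, 1 ≤ j → j + 1 < n →
    f j * f (j + 1) ^ 2 - (α⁻¹ + β⁻¹) • (f (j + 1) * f j * f (j + 1))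
      + (α⁻¹ * β⁻¹) • (f (j + 1) ^ 2 * f j) = 0

/-- Auxiliary recursion for the root vectors: `EvecAux α e l d = E_{l+d, l}`. -/
def EvecAux {k : Type u} [Field k] {U : Type v} [Ring U] [Algebra k U]
    (α : k) (e : ℕ → U) (l : ℕ) : ℕ → U
  | 0 => e l
  | d + 1 => e (l + d + 1) * EvecAux α e l d - α⁻¹ • (EvecAux α e l d * e (l + d + 1))

/-- The root vector `E_{kk,l} = [e_{kk}, E_{kk-1,l}]_{α⁻¹}` (with `E_{l,l} = e_l`). -/
def Eroot {k : Type u} [Field k] {U : Type v} [Ring U] [Algebra k U]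
    (α : k) (e : ℕ → U) (kk l : ℕ) : U :=
  EvecAux α e l (kk - l)

/-- Auxiliary recursion for the root vectors: `FvecAux β f l d = F_{l+d, l}`. -/
def FvecAux {k : Type u} [Field k] {U : Type v} [Ring U] [Algebra k U]
    (β : k) (f : ℕ → U) (l : ℕ) : ℕ → U
  | 0 => f l
  | d + 1 => f (l + d + 1) * FvecAux β f l d - β⁻¹ • (FvecAux β f l d * f (l + d + 1))

/-- The root vector `F_{kk,l} = [f_{kk}, F_{kk-1,l}]_{β⁻¹}` (with `F_{l,l} = f_l`). -/
def Froot {k : Type u} [Field k] {U : Type v} [Ring U] [Algebra k U]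
    (β : k) (f : ℕ → U) (kk l : ℕ) : U :=
  FvecAux β f l (kk - l)

/-- The comultiplication and counit of `U_{α,β}(gl_n)` on the generators:
`a_i, b_i` (and their inverses) are group-like, `e_j` is `(w_j,1)`-primitive and
`f_j` is `(1,w_j')`-primitive, where `w_j = a_j b_{j+1}` and `w_j' = a_{j+1} b_j`. -/
structure UglComul (k : Type u) [Field k] {U : Type v} [Ring U] [Bialgebra k U]
    (n : ℕ) (a ai b bi e f : ℕ → U) : Prop where
  com_a : ∀ i, 1 ≤ i → i ≤ n → Coalgebra.comul (R := k) (a i) = a i ⊗ₜ[k] a i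
  com_ai : ∀ i, 1 ≤ i → i ≤ n → Coalgebra.comul (R := k) (ai i) = ai i ⊗ₜ[k] ai i
  com_b : ∀ i, 1 ≤ i → i ≤ n → Coalgebra.comul (R := k) (b i) = b i ⊗ₜ[k] b i
  com_bi : ∀ i, 1 ≤ i → i ≤ n → Coalgebra.comul (R := k) (bi i) = bi i ⊗ₜ[k] bi i
  cou_a : ∀ i, 1 ≤ i → i ≤ n → Coalgebra.counit (R := k) (a i) = (1 : k)
  cou_ai : ∀ i, 1 ≤ i → i ≤ n → Coalgebra.counit (R := k) (ai i) = (1 : k)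
  cou_b : ∀ i, 1 ≤ i → i ≤ n → Coalgebra.counit (R := k) (b i) = (1 : k)
  cou_bi : ∀ i, 1 ≤ i → i ≤ n → Coalgebra.counit (R := k) (bi i) = (1 : k)
  com_e : ∀ j, 1 ≤ j → j < n →
    Coalgebra.comul (R := k) (e j) = e j ⊗ₜ[k] 1 + (a j * b (j + 1)) ⊗ₜ[k] e j
  com_f : ∀ j, 1 ≤ j → j < n →
    Coalgebra.comul (R := k) (f j) = 1 ⊗ₜ[k] f j + f j ⊗ₜ[k] (a (j + 1) * b j)
  cou_e : ∀ j, 1 ≤ j → j < n → Coalgebra.counit (R := k) (e j) = 0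
  cou_f : ∀ j, 1 ≤ j → j < n → Coalgebra.counit (R := k) (f j) = 0

/-- A Hopf pairing `⟨-,-⟩ : U × O → k` between two bialgebras, in elementwise form:
`⟨uv, x⟩ = ∑ ⟨u, x₍₁₎⟩⟨v, x₍₂₎⟩`, `⟨u, xy⟩ = ∑ ⟨u₍₁₎, x⟩⟨u₍₂₎, y⟩`, `⟨1, x⟩ = ε(x)`,
`⟨u, 1⟩ = ε(u)`. -/
structure IsHopfPairing {k : Type u} [Field k] {U O : Type v}
    [Ring U] [Bialgebra k U] [Ring O] [Bialgebra k O]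
    (pair : U →ₗ[k] O →ₗ[k] k) : Prop where
  pair_mul_left : ∀ (u v : U) (z : O) (m : ℕ) (y y' : Fin m → O),
    Coalgebra.comul (R := k) z = ∑ s, y s ⊗ₜ[k] y' s →
    pair (u * v) z = ∑ s, pair u (y s) * pair v (y' s)
  pair_mul_right : ∀ (u : U) (z w : O) (m : ℕ) (p q : Fin m → U),
    Coalgebra.comul (R := k) u = ∑ s, p s ⊗ₜ[k] q s →
    pair u (z * w) = ∑ s, pair (p s) z * pair (q s) w
  pair_one_left : ∀ z : O, pair 1 z = Coalgebra.counit (R := k) z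
  pair_one_right : ∀ u : U, pair u 1 = Coalgebra.counit (R := k) u

/-- The values of the Hopf pairing between `U_{α,β}(gl_n)` and `O_{α,β}(GL_n)`
on the generators. -/
structure PairVals {k : Type u} [Field k] {U O : Type v}
    [Ring U] [Algebra k U] [Ring O] [Algebra k O]
    (n : ℕ) (α β : k) (a ai b bi e f : ℕ → U) (x : ℕ → ℕ → O)
    (pair : U →ₗ[k] O →ₗ[k] k) : Prop where
  val_a : ∀ i s t, 1 ≤ i → i ≤ n → 1 ≤ s → s ≤ n → 1 ≤ t → t ≤ n →
    pair (a i) (x s t) = if s = t then (if i = s then α else 1) else 0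
  val_ai : ∀ i s t, 1 ≤ i → i ≤ n → 1 ≤ s → s ≤ n → 1 ≤ t → t ≤ n →
    pair (ai i) (x s t) = if s = t then (if i = s then α⁻¹ else 1) else 0
  val_b : ∀ i s t, 1 ≤ i → i ≤ n → 1 ≤ s → s ≤ n → 1 ≤ t → t ≤ n →
    pair (b i) (x s t) = if s = t then (if i = s then β else 1) else 0
  val_bi : ∀ i s t, 1 ≤ i → i ≤ n → 1 ≤ s → s ≤ n → 1 ≤ t → t ≤ n →
    pair (bi i) (x s t) = if s = t then (if i = s then β⁻¹ else 1) else 0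
  val_e : ∀ j s t, 1 ≤ j → j < n → 1 ≤ s → s ≤ n → 1 ≤ t → t ≤ n →
    pair (e j) (x s t) = if j = s ∧ t = j + 1 then 1 else 0
  val_f : ∀ j s t, 1 ≤ j → j < n → 1 ≤ s → s ≤ n → 1 ≤ t → t ≤ n →
    pair (f j) (x s t) = if s = j + 1 ∧ t = j then 1 else 0

/-- The defining relations of `O_{α,β}(M_n)` for a family `x i j` (`1 ≤ i,j ≤ n`)
indexed by natural numbers. -/
def QMRelN {k : Type u} [Field k] {O : Type v} [Ring O] [Algebra k O]
    (n : ℕ) (α β : k) (x : ℕ → ℕ → O) : Prop :=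
  (∀ i j l, 1 ≤ i → i ≤ n → 1 ≤ j → 1 ≤ l → l ≤ n → j < l →
    x i l * x i j = α⁻¹ • (x i j * x i l)) ∧
  (∀ i j l, 1 ≤ i → 1 ≤ j → j ≤ n → 1 ≤ l → l ≤ n → i < j →
    x j l * x i l = β • (x i l * x j l)) ∧
  (∀ i j l m, 1 ≤ i → 1 ≤ j → j ≤ n → 1 ≤ l → 1 ≤ m → m ≤ n → i < j → l < m →
    x j l * x i m = (β * α) • (x i m * x j l)) ∧
  (∀ i j l m, 1 ≤ i → 1 ≤ j → j ≤ n → 1 ≤ l → 1 ≤ m → m ≤ n → i < j → l < m →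
    x j m * x i l - x i l * x j m = (β - α) • (x i m * x j l))

/-- The comultiplication and counit of `O_{α,β}(M_n)` on the generators,
for a family indexed by natural numbers. -/
def OComulN (k : Type u) [Field k] {O : Type v} [Ring O] [Bialgebra k O]
    (n : ℕ) (x : ℕ → ℕ → O) : Prop :=
  (∀ i j, 1 ≤ i → i ≤ n → 1 ≤ j → j ≤ n →
    Coalgebra.comul (R := k) (x i j) = ∑ s ∈ Finset.Icc 1 n, x i s ⊗ₜ[k] x s j) ∧
  (∀ i j, 1 ≤ i → i ≤ n → 1 ≤ j → j ≤ n →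
    Coalgebra.counit (R := k) (x i j) = if i = j then (1 : k) else 0)

/-- with `h_i = a_i⁻¹ b_i`, for all `1 ≤ s,t ≤ n`, `1 ≤ i ≤ n` and
`1 ≤ j ≤ kk < n`: `⟨h_i^ℓ, x_{st}⟩ = δ_{st}`, `⟨h_i^{n_α} a_i⁻¹, x_{st}⟩ = δ_{st}`,
`⟨h_i^{n_β} b_i⁻¹, x_{st}⟩ = δ_{st}`, `⟨E_{kk,j}^ℓ, x_{st}⟩ = 0` and
`⟨F_{kk,j}^ℓ, x_{st}⟩ = 0`. -/
theorem pairing_kills_central_elements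
    {k : Type u} [Field k] [IsAlgClosed k] [CharZero k]
    {U O : Type v} [Ring U] [Bialgebra k U] [Ring O] [Bialgebra k O]
    (n : ℕ) (hn : 0 < n) (α β : k) (hα : α ≠ 0) (hβ : β ≠ 0)
    (ℓ : ℕ) (hodd : Odd ℓ) (hl3 : 3 ≤ ℓ)
    (hprim : IsPrimitiveRoot (α⁻¹ * β) ℓ) (hαl : α ^ ℓ = 1) (hβl : β ^ ℓ = 1)
    (hne1 : α ≠ β) (hne2 : α ≠ -β) (hne3 : α ≠ β⁻¹)
    (nα nβ : ℕ) (hnα : 0 < nα ∧ nα < ℓ ∧ (α⁻¹ * β) ^ nα = α)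
    (hnβ : 0 < nβ ∧ nβ < ℓ ∧ (α⁻¹ * β) ^ nβ = β)
    (a ai b bi e f : ℕ → U) (x : ℕ → ℕ → O)
    (hUrel : UglRel n α β a ai b bi e f) (hUcom : UglComul k n a ai b bi e f)
    (hOrel : QMRelN n α β x) (hOcom : OComulN k n x)
    (pair : U →ₗ[k] O →ₗ[k] k)
    (hpair : IsHopfPairing pair)
    (hvals : PairVals n α β a ai b bi e f x pair) :
    ∀ s t, 1 ≤ s → s ≤ n → 1 ≤ t → t ≤ n →
      (∀ i, 1 ≤ i → i ≤ n →
        pair ((ai i * b i) ^ ℓ) (x s t) = (if s = t then 1 else 0) ∧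
        pair ((ai i * b i) ^ nα * ai i) (x s t) = (if s = t then 1 else 0) ∧
        pair ((ai i * b i) ^ nβ * bi i) (x s t) = (if s = t then 1 else 0)) ∧
      (∀ j kk, 1 ≤ j → j ≤ kk → kk < n →
        pair (Eroot α e kk j ^ ℓ) (x s t) = 0 ∧
        pair (Froot β f kk j ^ ℓ) (x s t) = 0) := by
  intro s t hs1 hsn ht1 htn
  -- multiplicativity of the pairing against x s t
  have hmul : ∀ (u v : U) (s t : ℕ), 1 ≤ s → s ≤ n → 1 ≤ t → t ≤ n →
      pair (u * v) (x s t) = ∑ r ∈ Finset.Icc 1 n, pair u (x s r) * pair v (x r t) := by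
    intro u v s t hs1 hsn ht1 htn
    have hc : Coalgebra.comul (R := k) (x s t)
        = ∑ r : Fin n, x s (1 + r.1) ⊗ₜ[k] x (1 + r.1) t := by
      rw [hOcom.1 s t hs1 hsn ht1 htn, ← Finset.Ico_add_one_right_eq_Icc,
        Finset.sum_Ico_eq_sum_range]
      simp only [Nat.succ_sub_one, Nat.add_sub_cancel]
      exact (Fin.sum_univ_eq_sum_range _ n).symm
    rw [hpair.pair_mul_left u v (x s t) n _ _ hc, ← Finset.Ico_add_one_right_eq_Icc,
      Finset.sum_Ico_eq_sum_range]
    simp only [Nat.succ_sub_one, Nat.add_sub_cancel]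
    exact (Fin.sum_univ_eq_sum_range (fun r => pair u (x s (1 + r)) * pair v (x (1 + r) t)) n)
  have hone : ∀ s t, 1 ≤ s → s ≤ n → 1 ≤ t → t ≤ n →
      pair 1 (x s t) = if s = t then (1:k) else 0 := by
    intro s t hs1 hsn ht1 htn
    rw [hpair.pair_one_left, hOcom.2 s t hs1 hsn ht1 htn]
  constructor
  · -- group-like part
    intro i hi1 hin
    have hab : ∀ s t, 1 ≤ s → s ≤ n → 1 ≤ t → t ≤ n →
        pair (ai i * b i) (x s t)
          = if s = t then (if i = s then α⁻¹ * β else 1) else 0 := by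
      intro s t hs1 hsn ht1 htn
      rw [hmul _ _ s t hs1 hsn ht1 htn]
      rw [Finset.sum_eq_single_of_mem s (Finset.mem_Icc.mpr ⟨hs1, hsn⟩)]
      · rw [hvals.val_ai i s s hi1 hin hs1 hsn hs1 hsn,
          hvals.val_b i s t hi1 hin hs1 hsn ht1 htn]
        simp only [if_pos rfl]
        split_ifs <;> ring
      · intro r hr hrs
        obtain ⟨hr1, hrn⟩ := Finset.mem_Icc.mp hr
        rw [hvals.val_ai i s r hi1 hin hs1 hsn hr1 hrn]
        simp [Ne.symm hrs]
    have hpow : ∀ m : ℕ, ∀ s t, 1 ≤ s → s ≤ n → 1 ≤ t → t ≤ n →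
        pair ((ai i * b i) ^ m) (x s t)
          = if s = t then (if i = s then (α⁻¹ * β) ^ m else 1) else 0 := by
      intro m
      induction m with
      | zero => intro s t hs1 hsn ht1 htn; simpa using hone s t hs1 hsn ht1 htn
      | succ m ih =>
        intro s t hs1 hsn ht1 htn
        rw [pow_succ', hmul _ _ s t hs1 hsn ht1 htn]
        rw [Finset.sum_eq_single_of_mem s (Finset.mem_Icc.mpr ⟨hs1, hsn⟩)]
        · rw [hab s s hs1 hsn hs1 hsn, ih s t hs1 hsn ht1 htn]
          simp only [if_pos rfl]
          split_ifs <;> ring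
        · intro r hr hrs
          obtain ⟨hr1, hrn⟩ := Finset.mem_Icc.mp hr
          rw [hab s r hs1 hsn hr1 hrn]
          simp [Ne.symm hrs]
    refine ⟨?_, ?_, ?_⟩
    · rw [hpow ℓ s t hs1 hsn ht1 htn, hprim.pow_eq_one]
      split_ifs <;> rfl
    · rw [hmul _ _ s t hs1 hsn ht1 htn]
      rw [Finset.sum_eq_single_of_mem s (Finset.mem_Icc.mpr ⟨hs1, hsn⟩)]
      · rw [hpow nα s s hs1 hsn hs1 hsn,
          hvals.val_ai i s t hi1 hin hs1 hsn ht1 htn, hnα.2.2]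
        simp only [if_pos rfl]
        split_ifs <;> first | exact mul_inv_cancel₀ hα | ring
      · intro r hr hrs
        obtain ⟨hr1, hrn⟩ := Finset.mem_Icc.mp hr
        rw [hpow nα s r hs1 hsn hr1 hrn]
        simp [Ne.symm hrs]
    · rw [hmul _ _ s t hs1 hsn ht1 htn]
      rw [Finset.sum_eq_single_of_mem s (Finset.mem_Icc.mpr ⟨hs1, hsn⟩)]
      · rw [hpow nβ s s hs1 hsn hs1 hsn,
          hvals.val_bi i s t hi1 hin hs1 hsn ht1 htn, hnβ.2.2]
        simp only [if_pos rfl]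
        split_ifs <;> first | exact mul_inv_cancel₀ hβ | ring
      · intro r hr hrs
        obtain ⟨hr1, hrn⟩ := Finset.mem_Icc.mp hr
        rw [hpow nβ s r hs1 hsn hr1 hrn]
        simp [Ne.symm hrs]
  · -- root vector part
    intro j kk hj1 hjk hkn
    have hE : ∀ d, ∀ l, 1 ≤ l → l + d < n → ∀ s t, 1 ≤ s → s ≤ n → 1 ≤ t → t ≤ n →
        pair (EvecAux α e l d) (x s t)
          = (-α⁻¹) ^ d * (if s = l ∧ t = l + d + 1 then 1 else 0) := by
      intro d
      induction d with
      | zero =>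
        intro l hl1 hln s t hs1 hsn ht1 htn
        show pair (e l) (x s t) = _
        rw [hvals.val_e l s t hl1 (by omega) hs1 hsn ht1 htn]
        simp only [pow_zero, one_mul]
        congr 1
        simp only [eq_iff_iff]
        constructor <;> (rintro ⟨h1, h2⟩; omega)
      | succ d ih =>
        intro l hl1 hln s t hs1 hsn ht1 htn
        show pair (e (l + d + 1) * EvecAux α e l d
            - α⁻¹ • (EvecAux α e l d * e (l + d + 1))) (x s t) = _
        rw [map_sub, map_smul, LinearMap.sub_apply, LinearMap.smul_apply, smul_eq_mul]
        rw [hmul _ _ s t hs1 hsn ht1 htn, hmul _ _ s t hs1 hsn ht1 htn]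
        have t1 : ∑ r ∈ Finset.Icc 1 n,
            pair (e (l + d + 1)) (x s r) * pair (EvecAux α e l d) (x r t) = 0 := by
          apply Finset.sum_eq_zero
          intro r hr
          obtain ⟨hr1, hrn⟩ := Finset.mem_Icc.mp hr
          rw [hvals.val_e (l + d + 1) s r (by omega) (by omega) hs1 hsn hr1 hrn,
            ih l hl1 (by omega) r t hr1 hrn ht1 htn]
          split_ifs with h1 h2 <;> first | omega | ring
        rw [t1]
        rw [Finset.sum_eq_single_of_mem (l + d + 1)
          (Finset.mem_Icc.mpr ⟨by omega, by omega⟩)]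
        · rw [ih l hl1 (by omega) s (l + d + 1) hs1 hsn (by omega) (by omega),
            hvals.val_e (l + d + 1) (l + d + 1) t (by omega) (by omega)
              (by omega) (by omega) ht1 htn]
          simp only [and_true, true_and]
          split_ifs with h1 h2 <;> first | omega | ring
        · intro r hr hrs
          obtain ⟨hr1, hrn⟩ := Finset.mem_Icc.mp hr
          rw [ih l hl1 (by omega) s r hs1 hsn hr1 hrn]
          have : ¬ (s = l ∧ r = l + d + 1) := by omega
          simp [this]
    have hF : ∀ d, ∀ l, 1 ≤ l → l + d < n → ∀ s t, 1 ≤ s → s ≤ n → 1 ≤ t → t ≤ n →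
        pair (FvecAux β f l d) (x s t)
          = if s = l + d + 1 ∧ t = l then 1 else 0 := by
      intro d
      induction d with
      | zero =>
        intro l hl1 hln s t hs1 hsn ht1 htn
        show pair (f l) (x s t) = _
        rw [hvals.val_f l s t hl1 (by omega) hs1 hsn ht1 htn]
      | succ d ih =>
        intro l hl1 hln s t hs1 hsn ht1 htn
        show pair (f (l + d + 1) * FvecAux β f l d
            - β⁻¹ • (FvecAux β f l d * f (l + d + 1))) (x s t) = _
        rw [map_sub, map_smul, LinearMap.sub_apply, LinearMap.smul_apply, smul_eq_mul]
        rw [hmul _ _ s t hs1 hsn ht1 htn, hmul _ _ s t hs1 hsn ht1 htn]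
        have t2 : ∑ r ∈ Finset.Icc 1 n,
            pair (FvecAux β f l d) (x s r) * pair (f (l + d + 1)) (x r t) = 0 := by
          apply Finset.sum_eq_zero
          intro r hr
          obtain ⟨hr1, hrn⟩ := Finset.mem_Icc.mp hr
          rw [ih l hl1 (by omega) s r hs1 hsn hr1 hrn,
            hvals.val_f (l + d + 1) r t (by omega) (by omega) hr1 hrn ht1 htn]
          split_ifs with h1 h2 <;> first | omega | ring
        rw [t2, mul_zero, sub_zero]
        rw [Finset.sum_eq_single_of_mem (l + d + 1)
          (Finset.mem_Icc.mpr ⟨by omega, by omega⟩)]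
        · rw [hvals.val_f (l + d + 1) s (l + d + 1) (by omega) (by omega)
              hs1 hsn (by omega) (by omega),
            ih l hl1 (by omega) (l + d + 1) t (by omega) (by omega) ht1 htn]
          simp only [and_true, true_and]
          split_ifs with h1 h2 <;> first | omega | ring
        · intro r hr hrs
          obtain ⟨hr1, hrn⟩ := Finset.mem_Icc.mp hr
          rw [hvals.val_f (l + d + 1) s r (by omega) (by omega) hs1 hsn hr1 hrn]
          have : ¬ (s = l + d + 1 + 1 ∧ r = l + d + 1) := by omega
          simp [this]
    have hE2 : ∀ s t, 1 ≤ s → s ≤ n → 1 ≤ t → t ≤ n →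
        pair (Eroot α e kk j ^ 2) (x s t) = 0 := by
      intro s t hs1 hsn ht1 htn
      have hjd : j + (kk - j) < n := by omega
      rw [sq, hmul _ _ s t hs1 hsn ht1 htn]
      apply Finset.sum_eq_zero
      intro r hr
      obtain ⟨hr1, hrn⟩ := Finset.mem_Icc.mp hr
      unfold Eroot
      rw [hE (kk - j) j hj1 hjd s r hs1 hsn hr1 hrn,
        hE (kk - j) j hj1 hjd r t hr1 hrn ht1 htn]
      split_ifs with h1 h2 <;> first | omega | ring
    have hF2 : ∀ s t, 1 ≤ s → s ≤ n → 1 ≤ t → t ≤ n →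
        pair (Froot β f kk j ^ 2) (x s t) = 0 := by
      intro s t hs1 hsn ht1 htn
      have hjd : j + (kk - j) < n := by omega
      rw [sq, hmul _ _ s t hs1 hsn ht1 htn]
      apply Finset.sum_eq_zero
      intro r hr
      obtain ⟨hr1, hrn⟩ := Finset.mem_Icc.mp hr
      unfold Froot
      rw [hF (kk - j) j hj1 hjd s r hs1 hsn hr1 hrn,
        hF (kk - j) j hj1 hjd r t hr1 hrn ht1 htn]
      split_ifs with h1 h2 <;> first | omega | ring
    have hl2 : ℓ = 2 + (ℓ - 2) := by omega
    constructor
    · rw [hl2, pow_add, hmul _ _ s t hs1 hsn ht1 htn]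
      apply Finset.sum_eq_zero
      intro r hr
      obtain ⟨hr1, hrn⟩ := Finset.mem_Icc.mp hr
      rw [hE2 s r hs1 hsn hr1 hrn, zero_mul]
    · rw [hl2, pow_add, hmul _ _ s t hs1 hsn ht1 htn]
      apply Finset.sum_eq_zero
      intro r hr
      obtain ⟨hr1, hrn⟩ := Finset.mem_Icc.mp hr
      rw [hF2 s r hs1 hsn hr1 hrn, zero_mul]
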